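/- Any edge independent graph model A on n nodes with overlap Ov(A) has expected triangle count at most (n³/6) · Ov(A)³. -/

import Mathlib

open Finset

private lemma double_sum_split (n : ℕ) (f : Fin n → Fin n → ℝ)
    (hsym : ∀ i j, f i j = f j i) (hd : ∀ i, f i i = 0) :
    ∑ i : Fin n, ∑ j : Fin n, f i j
      = 2 * ∑ i : Fin n, ∑ j : Fin n, (if i < j then f i j else 0) := by
  have tri : ∀ i j : Fin n, f i j =
      (if i < j then f i j else 0) + (if j < i then f i j else 0) := by
    intro i j
    rcases lt_trichotomy i j with h | h | h
    · simp [h, not_lt_of_gt h]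
    · simp [h, hd]
    · simp [h, not_lt_of_gt h]
  calc ∑ i : Fin n, ∑ j : Fin n, f i j
      = ∑ i : Fin n, ∑ j : Fin n,
          ((if i < j then f i j else 0) + (if j < i then f i j else 0)) := by
        refine Finset.sum_congr rfl fun i _ => Finset.sum_congr rfl fun j _ => tri i j
    _ = (∑ i : Fin n, ∑ j : Fin n, (if i < j then f i j else 0))
        + ∑ i : Fin n, ∑ j : Fin n, (if j < i then f i j else 0) := by
        simp [Finset.sum_add_distrib]
    _ = 2 * ∑ i : Fin n, ∑ j : Fin n, (if i < j then f i j else 0) := by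
        rw [Finset.sum_comm (f := fun i j => (if j < i then f i j else 0))]
        have : ∀ j i : Fin n, (if j < i then f i j else 0)
            = (if j < i then f j i else 0) := by
          intro j i; rw [hsym]
        simp only [this]
        ring

theorem edge_independent_triangle_bound
    (n : ℕ) (P : Fin n → Fin n → ℝ)
    (h0 : ∀ i j, 0 ≤ P i j) (h1 : ∀ i j, P i j ≤ 1)
    (hsym : ∀ i j, P i j = P j i) (hdiag : ∀ i, P i i = 0)
    (Vol Ov : ℝ)
    (hVol : Vol = ∑ i : Fin n, ∑ j : Fin n, if i < j then P i j else 0)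
    (hVolpos : 0 < Vol)
    (hOv : Ov = (∑ i : Fin n, ∑ j : Fin n, if i < j then P i j ^ 2 else 0) / Vol) :
    (1 / 6 : ℝ) * ∑ i : Fin n, ∑ j : Fin n, ∑ k : Fin n, P i j * P j k * P k i ≤
      (n : ℝ) ^ 3 / 6 * Ov ^ 3 := by
  set S : ℝ := ∑ i : Fin n, ∑ j : Fin n, if i < j then P i j ^ 2 else 0 with hS
  set F : ℝ := ∑ i : Fin n, ∑ j : Fin n, P i j ^ 2 with hF
  set T : ℝ := ∑ i : Fin n, ∑ j : Fin n, ∑ k : Fin n, P i j * P j k * P k i with hT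
  -- F = 2 S
  have hF2S : F = 2 * S := by
    exact double_sum_split n (fun i j => P i j ^ 2)
      (fun i j => by rw [hsym]) (fun i => by simp [hdiag])
  -- 2 Vol = ∑∑ P
  have hW : ∑ i : Fin n, ∑ j : Fin n, P i j = 2 * Vol := by
    rw [hVol]; exact double_sum_split n P hsym hdiag
  have hFnonneg : 0 ≤ F := by
    refine Finset.sum_nonneg fun i _ => Finset.sum_nonneg fun j _ => sq_nonneg _
  have hSnonneg : 0 ≤ S := by
    refine Finset.sum_nonneg fun i _ => Finset.sum_nonneg fun j _ => ?_
    split <;> positivity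
  have hTnonneg : 0 ≤ T := by
    refine Finset.sum_nonneg fun i _ => Finset.sum_nonneg fun j _ =>
      Finset.sum_nonneg fun k _ => ?_
    have := h0 i j; have := h0 j k; have := h0 k i; positivity
  -- Cauchy–Schwarz: (2 Vol)^2 ≤ n^2 * F
  have hCS1 : (2 * Vol) ^ 2 ≤ (n : ℝ) ^ 2 * F := by
    rw [← hW]
    have := sq_sum_le_card_mul_sum_sq
      (s := (Finset.univ : Finset (Fin n × Fin n))) (f := fun p => P p.1 p.2)
    simp only [Finset.sum_product (s := (Finset.univ : Finset (Fin n))), Finset.card_univ,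
      Fintype.card_prod, Fintype.card_fin] at this
    calc (∑ i : Fin n, ∑ j : Fin n, P i j) ^ 2
        = (∑ p : Fin n × Fin n, P p.1 p.2) ^ 2 := by rw [Fintype.sum_prod_type]
      _ ≤ ((n * n : ℕ) : ℝ) * ∑ p : Fin n × Fin n, P p.1 p.2 ^ 2 := by
          simpa using this
      _ = (n : ℝ) ^ 2 * F := by
          rw [hF, Fintype.sum_prod_type]; push_cast; ring
  -- T^2 ≤ F^3
  have hT2 : T ^ 2 ≤ F ^ 3 := by
    set Q : Fin n → Fin n → ℝ := fun i k => ∑ j : Fin n, P i j * P j k with hQ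
    have hTQ : T = ∑ p : Fin n × Fin n, Q p.1 p.2 * P p.2 p.1 := by
      rw [hT, Fintype.sum_prod_type]
      refine Finset.sum_congr rfl fun i _ => ?_
      rw [Finset.sum_comm]
      refine Finset.sum_congr rfl fun k _ => ?_
      rw [hQ]; simp only []
      rw [Finset.sum_mul]
    have hcs : T ^ 2 ≤ (∑ p : Fin n × Fin n, Q p.1 p.2 ^ 2) *
        ∑ p : Fin n × Fin n, P p.2 p.1 ^ 2 := by
      rw [hTQ]
      exact Finset.sum_mul_sq_le_sq_mul_sq _ _ _
    have hPF : (∑ p : Fin n × Fin n, P p.2 p.1 ^ 2) = F := by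
      rw [hF, Fintype.sum_prod_type, Finset.sum_comm]
    have hQF : (∑ p : Fin n × Fin n, Q p.1 p.2 ^ 2) ≤ F ^ 2 := by
      have hpt : ∀ i k : Fin n, Q i k ^ 2 ≤
          (∑ j : Fin n, P i j ^ 2) * ∑ j : Fin n, P j k ^ 2 :=
        fun i k => Finset.sum_mul_sq_le_sq_mul_sq _ _ _
      calc (∑ p : Fin n × Fin n, Q p.1 p.2 ^ 2)
          ≤ ∑ p : Fin n × Fin n, (∑ j : Fin n, P p.1 j ^ 2) * ∑ j : Fin n, P j p.2 ^ 2 :=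
            Finset.sum_le_sum fun p _ => hpt p.1 p.2
        _ = (∑ i : Fin n, ∑ j : Fin n, P i j ^ 2) * ∑ k : Fin n, ∑ j : Fin n, P j k ^ 2 := by
            simp only [Fintype.sum_prod_type]
            rw [← Finset.sum_mul_sum]
        _ = F ^ 2 := by
            rw [hF, Finset.sum_comm (f := fun k j => P j k ^ 2)]; ring
    calc T ^ 2 ≤ (∑ p : Fin n × Fin n, Q p.1 p.2 ^ 2) * F := by rw [← hPF]; exact hcs
      _ ≤ F ^ 2 * F := mul_le_mul_of_nonneg_right hQF hFnonneg
      _ = F ^ 3 := by ring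
  clear_value S F T
  -- key: T * Vol^3 ≤ n^3 * S^3
  have hkey : T * Vol ^ 3 ≤ (n : ℝ) ^ 3 * S ^ 3 := by
    have hv2 : Vol ^ 2 ≤ (n : ℝ) ^ 2 * F / 4 := by nlinarith [hCS1]
    have hsq : (T * Vol ^ 3) ^ 2 ≤ ((n : ℝ) ^ 3 * S ^ 3) ^ 2 := by
      calc (T * Vol ^ 3) ^ 2 = T ^ 2 * (Vol ^ 2) ^ 3 := by ring
        _ ≤ F ^ 3 * (Vol ^ 2) ^ 3 := mul_le_mul_of_nonneg_right hT2 (by positivity)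
        _ ≤ F ^ 3 * ((n : ℝ) ^ 2 * F / 4) ^ 3 :=
            mul_le_mul_of_nonneg_left (pow_le_pow_left₀ (sq_nonneg Vol) hv2 3) (by positivity)
        _ = ((n : ℝ) ^ 3 * S ^ 3) ^ 2 := by rw [hF2S]; ring
    have hrhs : 0 ≤ (n : ℝ) ^ 3 * S ^ 3 := by positivity
    exact le_of_pow_le_pow_left₀ two_ne_zero hrhs hsq
  rw [hOv, div_pow]
  have heq : (n : ℝ) ^ 3 / 6 * (S ^ 3 / Vol ^ 3) = ((n : ℝ) ^ 3 * S ^ 3) / (6 * Vol ^ 3) := by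
    ring
  rw [heq, le_div_iff₀ (by positivity)]
  have : 1 / 6 * T * (6 * Vol ^ 3) = T * Vol ^ 3 := by ring
  rw [this]
  exact hkey
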